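/- Let α ≥ 1 be a real number, let k = ⌈2α⌉, and let n ≥ k be an integer. Then 2^{1−k} · ∏_{r=k+1}^{n} (1 − 2α/r) > n^{−2α}. -/

import Mathlib

open Nat

lemma aux_two_pow (k : ℕ) : 2 ^ (k - 1) ≤ k ! := by
  induction k with
  | zero => simp
  | succ k ih =>
    rcases Nat.eq_zero_or_pos k with h | h
    · subst h; simp
    · rw [show k + 1 - 1 = (k - 1) + 1 by omega, pow_succ, Nat.factorial_succ]
      calc 2 ^ (k-1) * 2 ≤ k ! * (k+1) := Nat.mul_le_mul ih (by omega)
        _ = (k+1) * k ! := by ring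

lemma aux_nat (k n : ℕ) (hk : 1 ≤ k) (h : k ≤ n) :
    2 ^ (k - 1) * (n ! * n) ≤ (n - k + 1)! * k ! * n ^ k := by
  have h1 : k - 1 ≤ n := by omega
  have h2 : (n - (k - 1))! * n.descFactorial (k - 1) = n ! :=
    Nat.factorial_mul_descFactorial h1
  have h3 : n - (k - 1) = n - k + 1 := by omega
  have h4 : n ^ (k - 1) * n = n ^ k := by
    rw [← pow_succ, Nat.sub_add_cancel hk]
  calc 2 ^ (k-1) * (n ! * n) = (n - k + 1)! * (2 ^ (k-1) * n.descFactorial (k-1)) * n := by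
        rw [← h2, h3]; ring
    _ ≤ (n - k + 1)! * (k ! * n ^ (k-1)) * n := by
        apply Nat.mul_le_mul_right
        apply Nat.mul_le_mul_left
        exact Nat.mul_le_mul (aux_two_pow k) (Nat.descFactorial_le_pow n (k-1))
    _ = (n - k + 1)! * k ! * n ^ k := by rw [← h4]; ring

lemma aux_prod (k c : ℕ) (hc : c ≤ k) (n : ℕ) (hn : k ≤ n) :
    ∏ r ∈ Finset.Icc (k+1) n, ((r : ℝ) - c) = (n - c)! / (k - c)! := by
  induction n, hn using Nat.le_induction with
  | base =>
    rw [Finset.Icc_eq_empty (by omega), Finset.prod_empty, div_self]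
    positivity
  | succ n hn ih =>
    rw [Finset.prod_Icc_succ_top (by omega : k + 1 ≤ n + 1), ih]
    have hcn : c ≤ n := le_trans hc hn
    rw [show n + 1 - c = (n - c) + 1 from by omega, Nat.factorial_succ]
    push_cast [Nat.cast_sub hcn]
    field_simp
    ring

/-- For every real `α ≥ 1`, with `k = ⌈2α⌉`, and every integer `n ≥ k`,
`2 ^ (1 - k) * ∏_{r = k+1}^{n} (1 - 2α/r) > n ^ (-2α)`. -/
theorem stmt5 (α : ℝ) (hα : 1 ≤ α) (n : ℕ) (hn : ⌈2 * α⌉₊ ≤ n) :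
    (2 : ℝ) ^ ((1 : ℤ) - (⌈2 * α⌉₊ : ℤ)) *
        ∏ r ∈ Finset.Icc (⌈2 * α⌉₊ + 1) n, (1 - 2 * α / (r : ℝ))
      > (n : ℝ) ^ (-(2 * α)) := by
  set k := ⌈2 * α⌉₊ with hkdef
  have hp2 : (2:ℝ) ≤ 2 * α := by linarith
  have hk2 : 2 ≤ k := by
    calc 2 = ⌈(2:ℝ)⌉₊ := by simp
      _ ≤ k := Nat.ceil_mono hp2
  have hpk : 2 * α ≤ (k:ℝ) := Nat.le_ceil _
  have hkp : (k:ℝ) < 2 * α + 1 := Nat.ceil_lt_add_one (by linarith)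
  set θ := (k:ℝ) - 2 * α with hθdef
  have hθ0 : 0 ≤ θ := by rw [hθdef]; linarith
  have hθ1 : θ < 1 := by rw [hθdef]; linarith
  have hn2 : 2 ≤ n := le_trans hk2 hn
  have hn0 : (0:ℝ) < n := by exact_mod_cast (show 0 < n by omega)
  set m := n - k with hmdef
  have hmn : m + k = n := by omega
  -- termwise bound
  have key1 : ∀ r ∈ Finset.Icc (k+1) n,
      (((r:ℝ) - (k-1:ℕ))/r)^θ * (((r:ℝ) - k)/r)^(1-θ) ≤ 1 - 2 * α / r := by
    intro r hr
    rw [Finset.mem_Icc] at hr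
    have hrk : (k:ℝ) + 1 ≤ r := by exact_mod_cast hr.1
    have hr0 : (0:ℝ) < r := by linarith [hk2, (by exact_mod_cast hk2 : (2:ℝ) ≤ (k:ℝ))]
    have hck : ((k-1:ℕ):ℝ) = (k:ℝ) - 1 := by
      push_cast [Nat.cast_sub (show 1 ≤ k by omega)]; ring
    have h1 : (0:ℝ) ≤ (r:ℝ) - (k-1:ℕ) := by rw [hck]; linarith
    have h2 : (0:ℝ) ≤ (r:ℝ) - k := by linarith
    calc (((r:ℝ) - (k-1:ℕ))/r)^θ * (((r:ℝ) - k)/r)^(1-θ)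
        = (((r:ℝ) - (k-1:ℕ))^θ * ((r:ℝ) - k)^(1-θ)) / r := by
          rw [Real.div_rpow h1 hr0.le, Real.div_rpow h2 hr0.le, _root_.div_mul_div_comm,
            ← Real.rpow_add hr0]
          norm_num
      _ ≤ (θ * ((r:ℝ) - (k-1:ℕ)) + (1-θ) * ((r:ℝ) - k)) / r := by
          gcongr
          exact Real.geom_mean_le_arith_mean2_weighted hθ0 (by linarith) h1 h2 (by ring)
      _ = 1 - 2 * α / r := by
          rw [hck, hθdef]
          field_simp
          ring
  have hnn1 : ∀ r ∈ Finset.Icc (k+1) n, (0:ℝ) ≤ ((r:ℝ) - (k-1:ℕ))/r := by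
    intro r hr
    rw [Finset.mem_Icc] at hr
    have hrk : (k:ℝ) + 1 ≤ r := by exact_mod_cast hr.1
    have hck : ((k-1:ℕ):ℝ) ≤ (k:ℝ) := by exact_mod_cast Nat.sub_le k 1
    apply div_nonneg (by linarith) (by linarith [(by exact_mod_cast hk2 : (2:ℝ) ≤ (k:ℝ))])
  have hnn2 : ∀ r ∈ Finset.Icc (k+1) n, (0:ℝ) ≤ ((r:ℝ) - k)/r := by
    intro r hr
    rw [Finset.mem_Icc] at hr
    have hrk : (k:ℝ) + 1 ≤ r := by exact_mod_cast hr.1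
    apply div_nonneg (by linarith) (by linarith [(by exact_mod_cast hk2 : (2:ℝ) ≤ (k:ℝ))])
  have hnn : ∀ r ∈ Finset.Icc (k+1) n,
      (0:ℝ) ≤ (((r:ℝ) - (k-1:ℕ))/r)^θ * (((r:ℝ) - k)/r)^(1-θ) := by
    intro r hr
    exact mul_nonneg (Real.rpow_nonneg (hnn1 r hr) _) (Real.rpow_nonneg (hnn2 r hr) _)
  have hprodle : ∏ r ∈ Finset.Icc (k+1) n,
        ((((r:ℝ) - (k-1:ℕ))/r)^θ * (((r:ℝ) - k)/r)^(1-θ))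
      ≤ ∏ r ∈ Finset.Icc (k+1) n, (1 - 2 * α / r) :=
    Finset.prod_le_prod hnn key1
  -- nonnegativity of the two quotient families
  have split : ∏ r ∈ Finset.Icc (k+1) n,
        ((((r:ℝ) - (k-1:ℕ))/r)^θ * (((r:ℝ) - k)/r)^(1-θ))
      = (∏ r ∈ Finset.Icc (k+1) n, (((r:ℝ) - (k-1:ℕ))/r))^θ
        * (∏ r ∈ Finset.Icc (k+1) n, (((r:ℝ) - k)/r))^(1-θ) := by
    rw [Finset.prod_mul_distrib, Real.finset_prod_rpow _ _ hnn1,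
      Real.finset_prod_rpow _ _ hnn2]
  have hprodr : ∏ r ∈ Finset.Icc (k+1) n, (r:ℝ) = (n ! : ℝ) / (k ! : ℝ) := by
    have := aux_prod k 0 (Nat.zero_le _) n hn
    simpa using this
  have hprod1 : ∏ r ∈ Finset.Icc (k+1) n, (((r:ℝ) - (k-1:ℕ))/r)
      = ((m+1)! : ℝ) * (k ! : ℝ) / (n ! : ℝ) := by
    rw [Finset.prod_div_distrib, aux_prod k (k-1) (by omega) n hn, hprodr,
      show n - (k-1) = m + 1 from by omega, show k - (k-1) = 1 from by omega]
    have h0 : (n ! : ℝ) ≠ 0 := by positivity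
    have h1 : (k ! : ℝ) ≠ 0 := by positivity
    field_simp [Nat.factorial_one]
    simp
  have hprod2 : ∏ r ∈ Finset.Icc (k+1) n, (((r:ℝ) - k)/r)
      = (m ! : ℝ) * (k ! : ℝ) / (n ! : ℝ) := by
    rw [Finset.prod_div_distrib, aux_prod k k le_rfl n hn, hprodr,
      show n - k = m from rfl, Nat.sub_self]
    have h0 : (n ! : ℝ) ≠ 0 := by positivity
    have h1 : (k ! : ℝ) ≠ 0 := by positivity
    field_simp [Nat.factorial_zero]
    simp
  set B : ℝ := (m ! : ℝ) * (k ! : ℝ) / (n ! : ℝ) with hBdef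
  have hBpos : 0 < B := by rw [hBdef]; positivity
  have h2pos : (0:ℝ) < (2:ℝ) ^ ((1:ℤ) - (k:ℤ)) := by positivity
  have hz : (2:ℝ) ^ ((1:ℤ) - (k:ℤ)) = ((2:ℝ) ^ (k-1))⁻¹ := by
    rw [show (1:ℤ) - (k:ℤ) = -((k-1:ℕ):ℤ) from by push_cast [Nat.cast_sub (show 1 ≤ k by omega)]; ring,
      zpow_neg, zpow_natCast]
  -- the core numeric inequality
  have hnat : 2 ^ (k - 1) * (n ! * n) ≤ (m+1)! * k ! * n ^ k := by
    have := aux_nat k n (by omega) hn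
    rwa [show n - k + 1 = m + 1 from rfl] at this
  have hreal : (2:ℝ) ^ (k-1) * ((n ! : ℝ) * n) ≤ ((m+1)! : ℝ) * (k ! : ℝ) * (n:ℝ) ^ k := by
    exact_mod_cast hnat
  have hrw : (n:ℝ) ^ (-(2*α)) = ((n:ℝ) ^ k)⁻¹ * (n:ℝ) ^ θ := by
    rw [← Real.rpow_natCast n k, ← Real.rpow_neg hn0.le, ← Real.rpow_add hn0]
    congr 1
    rw [hθdef]; ring
  have hnθ : (0:ℝ) < (n:ℝ) ^ θ := Real.rpow_pos_of_pos hn0 θ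
  set x : ℝ := ((m:ℝ) + 1) / n with hxdef
  have hx0 : 0 < x := by rw [hxdef]; positivity
  have hx1 : x < 1 := by
    rw [hxdef, div_lt_one hn0]
    have : m + 1 < n := by omega
    exact_mod_cast this
  have hxθ : x < x ^ θ := by
    have := Real.rpow_lt_rpow_of_exponent_gt hx0 hx1 hθ1
    rwa [Real.rpow_one] at this
  have step1 : (n:ℝ) ^ (-(2*α)) ≤ (2:ℝ) ^ ((1:ℤ) - (k:ℤ)) * B * x * (n:ℝ) ^ θ := by
    rw [hrw]
    apply mul_le_mul_of_nonneg_right _ hnθ.le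
    rw [hz, hBdef, hxdef]
    rw [show ((2:ℝ)^(k-1))⁻¹ * ((m ! : ℝ) * (k ! : ℝ) / (n ! : ℝ)) * (((m:ℝ)+1)/n)
        = ((m ! : ℝ) * (k ! : ℝ) * ((m:ℝ)+1)) / ((2:ℝ)^(k-1) * ((n ! : ℝ) * n)) from by
      field_simp]
    rw [inv_eq_one_div, div_le_div_iff₀ (by positivity) (by positivity)]
    calc 1 * ((2:ℝ)^(k-1) * ((n ! : ℝ) * n)) = (2:ℝ)^(k-1) * ((n ! : ℝ) * n) := by ring
      _ ≤ ((m+1)! : ℝ) * (k ! : ℝ) * (n:ℝ) ^ k := hreal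
      _ = (m ! : ℝ) * (k ! : ℝ) * ((m:ℝ)+1) * (n:ℝ) ^ k := by
          push_cast [Nat.factorial_succ]; ring
  have step2 : (2:ℝ) ^ ((1:ℤ) - (k:ℤ)) * B * x * (n:ℝ) ^ θ
      < (2:ℝ) ^ ((1:ℤ) - (k:ℤ)) * B * x ^ θ * (n:ℝ) ^ θ := by
    have hpos : 0 < (2:ℝ) ^ ((1:ℤ) - (k:ℤ)) * B := mul_pos h2pos hBpos
    apply mul_lt_mul_of_pos_right _ hnθ
    rw [mul_assoc, mul_assoc]
    exact mul_lt_mul_of_pos_left (by exact mul_lt_mul_of_pos_left hxθ hBpos) h2pos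
  have hA : ((m+1)! : ℝ) * (k ! : ℝ) / (n ! : ℝ) = B * ((m:ℝ) + 1) := by
    rw [hBdef]; push_cast [Nat.factorial_succ]; field_simp
  have step3 : (2:ℝ) ^ ((1:ℤ) - (k:ℤ)) * B * x ^ θ * (n:ℝ) ^ θ
      = (2:ℝ) ^ ((1:ℤ) - (k:ℤ)) *
        ((((m+1)! : ℝ) * (k ! : ℝ) / (n ! : ℝ))^θ * B^(1-θ)) := by
    rw [hA, Real.mul_rpow hBpos.le (by positivity), hxdef,
      Real.div_rpow (by positivity) hn0.le]
    rw [show B^θ * (((m:ℝ)+1)^θ) * B^(1-θ) = B^θ * B^(1-θ) * (((m:ℝ)+1)^θ) from by ring,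
      ← Real.rpow_add hBpos, show θ + (1-θ) = 1 from by ring, Real.rpow_one]
    field_simp
  rw [gt_iff_lt]
  calc (n:ℝ) ^ (-(2*α)) ≤ (2:ℝ) ^ ((1:ℤ) - (k:ℤ)) * B * x * (n:ℝ) ^ θ := step1
    _ < (2:ℝ) ^ ((1:ℤ) - (k:ℤ)) * B * x ^ θ * (n:ℝ) ^ θ := step2
    _ = (2:ℝ) ^ ((1:ℤ) - (k:ℤ)) *
        ((((m+1)! : ℝ) * (k ! : ℝ) / (n ! : ℝ))^θ * B^(1-θ)) := step3
    _ = (2:ℝ) ^ ((1:ℤ) - (k:ℤ)) * ∏ r ∈ Finset.Icc (k+1) n,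
        ((((r:ℝ) - (k-1:ℕ))/r)^θ * (((r:ℝ) - k)/r)^(1-θ)) := by
        rw [split, hprod1, hprod2, hBdef]
    _ ≤ (2:ℝ) ^ ((1:ℤ) - (k:ℤ)) * ∏ r ∈ Finset.Icc (k+1) n, (1 - 2 * α / r) :=
        mul_le_mul_of_nonneg_left hprodle h2pos.le
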